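/- arXiv:2006.03958 — 6 statements merged into one kernel-verified Lean document; each statement's English description precedes it below -/
import Mathlib

section
/- Let D > 0, λ > 0, and ε ∈ {+1,−1}. Along every solution (u₁(y), v₁(y), u₂(y), v₂(y)) of the sheet system u₁′ = u₂, v₁′ = u₁ + λ − ε√(λ² + 2u₁), D u₂′ = v₂, D v₂′ = −u₂ − v₁ with u₁(y) > −λ²/2, the function H_ε = u₂v₁ − u₁²/2 − λu₁ + (u₂² + v₂²)/2 + ε·(1/3)(λ² + 2u₁)^{3/2} is constant. -/
/-- the Hamiltonian
`H_ε = u₂v₁ − u₁²/2 − λu₁ + (u₂² + v₂²)/2 + ε(1/3)(λ² + 2u₁)^{3/2}`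
is constant along every solution of the sheet system
`u₁′ = u₂`, `v₁′ = u₁ + λ − ε√(λ² + 2u₁)`, `D u₂′ = v₂`, `D v₂′ = −u₂ − v₁`
staying in the region `u₁ > −λ²/2`. -/
theorem stmt_2 (D lam eps : ℝ) (hD : 0 < D) (hlam : 0 < lam)
    (heps : eps = 1 ∨ eps = -1)
    (u1 v1 u2 v2 : ℝ → ℝ)
    (hdom : ∀ y, u1 y > -lam ^ 2 / 2)
    (h1 : ∀ y, HasDerivAt u1 (u2 y) y)
    (h2 : ∀ y, HasDerivAt v1 (u1 y + lam - eps * Real.sqrt (lam ^ 2 + 2 * u1 y)) y)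
    (h3 : ∀ y, HasDerivAt u2 (v2 y / D) y)
    (h4 : ∀ y, HasDerivAt v2 ((-u2 y - v1 y) / D) y) :
    ∀ y z : ℝ,
      u2 y * v1 y - (u1 y) ^ 2 / 2 - lam * u1 y + ((u2 y) ^ 2 + (v2 y) ^ 2) / 2
        + eps * (1 / 3) * (lam ^ 2 + 2 * u1 y) ^ ((3 : ℝ) / 2)
      = u2 z * v1 z - (u1 z) ^ 2 / 2 - lam * u1 z + ((u2 z) ^ 2 + (v2 z) ^ 2) / 2
        + eps * (1 / 3) * (lam ^ 2 + 2 * u1 z) ^ ((3 : ℝ) / 2) := by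
  set H : ℝ → ℝ := fun y =>
    u2 y * v1 y - (u1 y) ^ 2 / 2 - lam * u1 y + ((u2 y) ^ 2 + (v2 y) ^ 2) / 2
      + eps * (1 / 3) * (lam ^ 2 + 2 * u1 y) ^ ((3 : ℝ) / 2) with hH
  have key : ∀ y, HasDerivAt H 0 y := by
    intro y
    have hpos : (0 : ℝ) < lam ^ 2 + 2 * u1 y := by
      have := hdom y; nlinarith
    have hg : HasDerivAt (fun y => lam ^ 2 + 2 * u1 y) (2 * u2 y) y := by
      simpa using ((h1 y).const_mul 2).const_add (lam ^ 2)
    have hr := hg.rpow_const (Or.inr (by norm_num : (1:ℝ) ≤ 3/2))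
    have hexp : (lam ^ 2 + 2 * u1 y) ^ ((3 : ℝ) / 2 - 1)
        = Real.sqrt (lam ^ 2 + 2 * u1 y) := by
      rw [Real.sqrt_eq_rpow]; norm_num
    rw [hexp] at hr
    have base := (((((h3 y).mul (h2 y)).sub (((h1 y).pow 2).div_const 2)).sub
        ((h1 y).const_mul lam)).add ((((h3 y).pow 2).add ((h4 y).pow 2)).div_const 2)).add
        (hr.const_mul (eps * (1/3)))
    have hmain : HasDerivAt H _ y := base
    convert hmain using 1
    field_simp
    ring
  intro y z
  have hdiff : Differentiable ℝ H := fun y => (key y).differentiableAt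
  have := is_const_of_deriv_eq_zero hdiff (fun y => (key y).deriv) y z
  simpa [hH] using this
end

section
/- Let D > 0 and λ ∈ ℝ. Along every solution (r(s), v₁(s), u₂(s), v₂(s)) of the smooth reduced system dr/ds = u₂, dv₁/ds = λ(1−λ/2)r − r² + r³/2, D du₂/ds = r v₂, D dv₂/ds = −r(u₂ + v₁), the function H = u₂v₁ + (u₂² + v₂²)/2 − λ(1 − λ/2)r²/2 + r³/3 − r⁴/8 is constant. -/
/-- the Hamiltonian
`H = u₂v₁ + (u₂² + v₂²)/2 − λ(1 − λ/2)r²/2 + r³/3 − r⁴/8`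
is constant along every solution of the smooth reduced system
`r′ = u₂`, `v₁′ = λ(1−λ/2)r − r² + r³/2`, `D u₂′ = r v₂`, `D v₂′ = −r(u₂+v₁)`. -/
theorem stmt_4 (D lam : ℝ) (hD : 0 < D)
    (r v1 u2 v2 : ℝ → ℝ)
    (h1 : ∀ s, HasDerivAt r (u2 s) s)
    (h2 : ∀ s, HasDerivAt v1 (lam * (1 - lam / 2) * r s - (r s) ^ 2 + (r s) ^ 3 / 2) s)
    (h3 : ∀ s, HasDerivAt u2 (r s * v2 s / D) s)
    (h4 : ∀ s, HasDerivAt v2 (-(r s * (u2 s + v1 s)) / D) s) :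
    ∀ s t : ℝ,
      u2 s * v1 s + ((u2 s) ^ 2 + (v2 s) ^ 2) / 2 - lam * (1 - lam / 2) * (r s) ^ 2 / 2
        + (r s) ^ 3 / 3 - (r s) ^ 4 / 8
      = u2 t * v1 t + ((u2 t) ^ 2 + (v2 t) ^ 2) / 2 - lam * (1 - lam / 2) * (r t) ^ 2 / 2
        + (r t) ^ 3 / 3 - (r t) ^ 4 / 8 := by
  have hDne : D ≠ 0 := ne_of_gt hD
  set H : ℝ → ℝ := fun s =>
    u2 s * v1 s + ((u2 s) ^ 2 + (v2 s) ^ 2) / 2 - lam * (1 - lam / 2) * (r s) ^ 2 / 2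
      + (r s) ^ 3 / 3 - (r s) ^ 4 / 8 with hH
  have key : ∀ s, HasDerivAt H 0 s := by
    intro s
    have hu2sq : HasDerivAt (fun x => (u2 x) ^ 2) (2 * u2 s ^ 1 * (r s * v2 s / D)) s :=
      (h3 s).pow 2
    have hv2sq : HasDerivAt (fun x => (v2 x) ^ 2)
        (2 * v2 s ^ 1 * (-(r s * (u2 s + v1 s)) / D)) s := (h4 s).pow 2
    have hr2 : HasDerivAt (fun x => (r x) ^ 2) (2 * r s ^ 1 * u2 s) s := (h1 s).pow 2
    have hr3 : HasDerivAt (fun x => (r x) ^ 3) (3 * r s ^ 2 * u2 s) s := (h1 s).pow 3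
    have hr4 : HasDerivAt (fun x => (r x) ^ 4) (4 * r s ^ 3 * u2 s) s := (h1 s).pow 4
    have hd : HasDerivAt H
        ((r s * v2 s / D) * v1 s
          + u2 s * (lam * (1 - lam / 2) * r s - (r s) ^ 2 + (r s) ^ 3 / 2)
          + (2 * u2 s ^ 1 * (r s * v2 s / D)
              + 2 * v2 s ^ 1 * (-(r s * (u2 s + v1 s)) / D)) / 2
          - lam * (1 - lam / 2) * (2 * r s ^ 1 * u2 s) / 2
          + (3 * r s ^ 2 * u2 s) / 3
          - (4 * r s ^ 3 * u2 s) / 8) s := by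
      exact (((((h3 s).mul (h2 s)).add ((hu2sq.add hv2sq).div_const 2)).sub
        (((hr2.const_mul (lam * (1 - lam / 2))).div_const 2))).add
        (hr3.div_const 3)).sub (hr4.div_const 8)
    convert hd using 1
    field_simp
    ring
  intro s t
  have := is_const_of_deriv_eq_zero (f := H)
    (fun x => (key x).differentiableAt) (fun x => (key x).deriv) s t
  simpa [hH] using this
end

section
/- Let D > 0. Along every solution (r(s), v₁(s), u₂(s), v₂(s)) of the system r′ = u₂, v₁′ = −r² + r³/2, D u₂′ = r v₂, D v₂′ = −r(u₂ + v₁) (the smooth reduced system with λ = 0), the function H₀ = u₂v₁ + (u₂² + v₂²)/2 + r³/3 − r⁴/8 is constant. -/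
/-- the function `H₀ = u₂v₁ + (u₂² + v₂²)/2 + r³/3 − r⁴/8` is constant
along every solution of the `λ = 0` smooth reduced system
`r′ = u₂`, `v₁′ = −r² + r³/2`, `D u₂′ = r v₂`, `D v₂′ = −r(u₂+v₁)`. -/
theorem stmt_10 (D : ℝ) (hD : 0 < D)
    (r v1 u2 v2 : ℝ → ℝ)
    (h1 : ∀ s, HasDerivAt r (u2 s) s)
    (h2 : ∀ s, HasDerivAt v1 (-(r s) ^ 2 + (r s) ^ 3 / 2) s)
    (h3 : ∀ s, HasDerivAt u2 (r s * v2 s / D) s)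
    (h4 : ∀ s, HasDerivAt v2 (-(r s * (u2 s + v1 s)) / D) s) :
    ∀ s t : ℝ,
      u2 s * v1 s + ((u2 s) ^ 2 + (v2 s) ^ 2) / 2 + (r s) ^ 3 / 3 - (r s) ^ 4 / 8
      = u2 t * v1 t + ((u2 t) ^ 2 + (v2 t) ^ 2) / 2 + (r t) ^ 3 / 3 - (r t) ^ 4 / 8 := by
  have hderiv : ∀ s, HasDerivAt (fun s =>
      u2 s * v1 s + ((u2 s) ^ 2 + (v2 s) ^ 2) / 2 + (r s) ^ 3 / 3 - (r s) ^ 4 / 8) 0 s := by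
    intro s
    have hu2v1 := (h3 s).mul (h2 s)
    have hsq := (((h3 s).pow 2).add ((h4 s).pow 2)).div_const 2
    have hr3 := ((h1 s).pow 3).div_const 3
    have hr4 := ((h1 s).pow 4).div_const 8
    have h := ((hu2v1.add hsq).add hr3).sub hr4
    convert h using 1
    · rfl
    · rfl
    · rfl
    have hD' : D ≠ 0 := hD.ne'
    field_simp
    ring
  intro s t
  have hconst := is_const_of_deriv_eq_zero (f := fun s =>
      u2 s * v1 s + ((u2 s) ^ 2 + (v2 s) ^ 2) / 2 + (r s) ^ 3 / 3 - (r s) ^ 4 / 8)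
    (fun x => (hderiv x).differentiableAt) (fun x => (hderiv x).deriv) s t
  simpa using hconst
end

section
/- Let D > 0 and 0 < λ < 1 with 4D²(1−λ)/(2−λ) < 1. Then every complex root σ of the polynomial D²σ⁴ + σ² + (1−λ)/(2−λ) is nonzero and purely imaginary, and the roots are given by σ² = (−1 ± √(1 − 4D²(1−λ)/(2−λ)))/(2D²), both values of σ² being negative real numbers. In particular the second equilibrium (2(1−λ),0,0,0) of the upper-sheet system is an elliptic point. -/
lemma neg_sq_aux (r : ℝ) (hr : r < 0) (σ : ℂ) (h : σ ^ 2 = (r : ℂ)) :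
    σ ≠ 0 ∧ σ.re = 0 := by
  have hre := congrArg Complex.re h
  have him := congrArg Complex.im h
  simp [pow_two, Complex.mul_re, Complex.mul_im] at hre him
  constructor
  · intro h0
    rw [h0] at h
    norm_num at h
    have : r = 0 := by exact_mod_cast h.symm
    linarith
  · rcases mul_eq_zero.mp (by linarith : σ.re * σ.im = 0) with h' | h'
    · exact h'
    · nlinarith
/-- for `D > 0`, `0 < λ < 1` with `4D²(1−λ)/(2−λ) < 1`, every complex root of
`D²σ⁴ + σ² + (1−λ)/(2−λ)` is nonzero and purely imaginary, and the roots satisfy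
`σ² = (−1 ± √(1 − 4D²(1−λ)/(2−λ)))/(2D²)`, both values being negative reals; in particular
the equilibrium `(2(1−λ),0,0,0)` of the upper-sheet system is an elliptic point. -/
theorem stmt_14 (D lam : ℝ) (hD : 0 < D) (h0 : 0 < lam) (h1 : lam < 1)
    (hdisc : 4 * D ^ 2 * (1 - lam) / (2 - lam) < 1) :
    let rp : ℝ := (-1 + Real.sqrt (1 - 4 * D ^ 2 * (1 - lam) / (2 - lam))) / (2 * D ^ 2)
    let rm : ℝ := (-1 - Real.sqrt (1 - 4 * D ^ 2 * (1 - lam) / (2 - lam))) / (2 * D ^ 2)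
    (∀ σ : ℂ, (D : ℂ) ^ 2 * σ ^ 4 + σ ^ 2 + (((1 - lam) / (2 - lam) : ℝ) : ℂ) = 0 →
      σ ≠ 0 ∧ σ.re = 0) ∧
    (∀ σ : ℂ, ((D : ℂ) ^ 2 * σ ^ 4 + σ ^ 2 + (((1 - lam) / (2 - lam) : ℝ) : ℂ) = 0 ↔
      (σ ^ 2 = (rp : ℂ) ∨ σ ^ 2 = (rm : ℂ)))) ∧
    rp < 0 ∧ rm < 0 := by
  intro rp rm
  set c : ℝ := (1 - lam) / (2 - lam) with hc
  have h2l : (0:ℝ) < 2 - lam := by linarith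
  have hcpos : 0 < c := div_pos (by linarith) h2l
  have hD2 : (0:ℝ) < D ^ 2 := by positivity
  set s : ℝ := Real.sqrt (1 - 4 * D ^ 2 * (1 - lam) / (2 - lam)) with hsdef
  have hx : 1 - 4 * D ^ 2 * (1 - lam) / (2 - lam) = 1 - 4 * D ^ 2 * c := by
    rw [hc]; ring
  have hxpos : 0 < 1 - 4 * D ^ 2 * c := by rw [← hx]; linarith
  have hs2 : s ^ 2 = 1 - 4 * D ^ 2 * c := by
    rw [hsdef, Real.sq_sqrt (by linarith), hx]
  have hsnn : 0 ≤ s := Real.sqrt_nonneg _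
  have hs1 : s < 1 := by nlinarith
  have hrp : rp < 0 := div_neg_of_neg_of_pos (by linarith) (by positivity)
  have hrm : rm < 0 := div_neg_of_neg_of_pos (by linarith) (by positivity)
  have h1r : D ^ 2 * (rp + rm) = -1 := by
    show D ^ 2 * ((-1 + s) / (2 * D ^ 2) + (-1 - s) / (2 * D ^ 2)) = -1
    field_simp
    ring
  have h2r : D ^ 2 * (rp * rm) = c := by
    show D ^ 2 * ((-1 + s) / (2 * D ^ 2) * ((-1 - s) / (2 * D ^ 2))) = c
    field_simp
    nlinarith [hs2]
  have h1c : (D : ℂ) ^ 2 * ((rp : ℂ) + (rm : ℂ)) = -1 := by exact_mod_cast h1r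
  have h2c : (D : ℂ) ^ 2 * ((rp : ℂ) * (rm : ℂ)) = (c : ℂ) := by exact_mod_cast h2r
  have hfact : ∀ σ : ℂ, (D : ℂ) ^ 2 * σ ^ 4 + σ ^ 2 + (c : ℂ) =
      (D : ℂ) ^ 2 * (σ ^ 2 - (rp : ℂ)) * (σ ^ 2 - (rm : ℂ)) := by
    intro σ
    linear_combination σ ^ 2 * h1c - h2c
  have hDne : ((D : ℂ) ^ 2) ≠ 0 := by
    simpa using pow_ne_zero 2 (Complex.ofReal_ne_zero.mpr (ne_of_gt hD))
  have hiff : ∀ σ : ℂ, (D : ℂ) ^ 2 * σ ^ 4 + σ ^ 2 + (c : ℂ) = 0 ↔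
      (σ ^ 2 = (rp : ℂ) ∨ σ ^ 2 = (rm : ℂ)) := by
    intro σ
    rw [hfact σ, mul_assoc, mul_eq_zero, mul_eq_zero]
    constructor
    · rintro (h | h | h)
      · exact absurd h hDne
      · exact Or.inl (sub_eq_zero.mp h)
      · exact Or.inr (sub_eq_zero.mp h)
    · rintro (h | h)
      · exact Or.inr (Or.inl (sub_eq_zero.mpr h))
      · exact Or.inr (Or.inr (sub_eq_zero.mpr h))
  refine ⟨?_, hiff, hrp, hrm⟩
  intro σ hσ
  rcases (hiff σ).mp hσ with h | h
  · exact neg_sq_aux rp hrp σ h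
  · exact neg_sq_aux rm hrm σ h
end

section
/- Let D² > 1/4 and λ > λ₀ where λ₀ = 4D²/(4D² − 1). Then every complex root σ of the polynomial D²σ⁴ + σ² − (1−λ)/λ has nonzero real part and nonzero imaginary part; in particular the polynomial has no real roots and no purely imaginary roots, so the equilibrium O of the upper-sheet system is a saddle-focus. -/
/-- for `D² > 1/4` and `λ > λ₀ = 4D²/(4D²−1)`, every complex root of
`D²σ⁴ + σ² − (1−λ)/λ` has nonzero real part and nonzero imaginary part; in particular
this polynomial has no real and no purely imaginary roots, so the equilibrium `O` of the
upper-sheet system is a saddle-focus. -/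
theorem stmt_16 (D lam : ℝ) (hD : 0 < D) (hD2 : 1 / 4 < D ^ 2)
    (hlam : 4 * D ^ 2 / (4 * D ^ 2 - 1) < lam) :
    ∀ σ : ℂ, (D : ℂ) ^ 2 * σ ^ 4 + σ ^ 2 - (((1 - lam) / lam : ℝ) : ℂ) = 0 →
      σ.re ≠ 0 ∧ σ.im ≠ 0 := by
  intro σ h
  have hden : 0 < 4 * D ^ 2 - 1 := by nlinarith
  have hlam0 : 0 < lam := lt_trans (by positivity) hlam
  have hkey : lam < 4 * D ^ 2 * (lam - 1) := by
    have := (div_lt_iff₀ hden).mp hlam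
    nlinarith
  -- no real r satisfies D^2 r^2 + r - c = 0
  have hreal : ∀ r : ℝ, D ^ 2 * r ^ 2 + r - (1 - lam) / lam ≠ 0 := by
    intro r hr
    have hr' : lam * (D ^ 2 * r ^ 2 + r) = 1 - lam := by
      field_simp at hr
      linarith
    nlinarith [sq_nonneg (2 * D ^ 2 * r + 1), sq_nonneg r, hlam0]
  set x := σ.re with hx
  set y := σ.im with hy
  have him : ((D : ℂ) ^ 2 * σ ^ 4 + σ ^ 2 - (((1 - lam) / lam : ℝ) : ℂ)).re = 0 := by
    rw [h]; rfl
  have hre : D ^ 2 * (x ^ 4 - 6 * x ^ 2 * y ^ 2 + y ^ 4) + (x ^ 2 - y ^ 2)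
      - (1 - lam) / lam = 0 := by
    rw [← him]
    simp [pow_succ, Complex.mul_re, Complex.mul_im, ← hx, ← hy]
    ring_nf
    tauto
  constructor
  · intro hx0
    rw [hx0] at hre
    exact hreal (-(y ^ 2)) (by nlinarith)
  · intro hy0
    rw [hy0] at hre
    exact hreal (x ^ 2) (by nlinarith)
end

section
/- Let 0 < D² < 1/4 and set λ₋ = 4D²/(4D² − 1) (so λ₋ < 0). Consider the polynomial D²σ⁴ + σ² − (1−λ)/λ for λ < 0. Then: (1) if λ₋ < λ < 0, every complex root has nonzero real part and nonzero imaginary part (the equilibrium O on the lower sheet is a saddle-focus); (2) if λ < λ₋, every complex root is nonzero and purely imaginary (O is an elliptic point). Moreover, (3) if D² ≥ 1/4, then for every λ < 0 every complex root has nonzero real part and nonzero imaginary part. -/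
private lemma saddle_aux (D c : ℝ) (hD : 0 < D) (hc : c < 0) (hΔ : 1 + 4*D^2*c < 0)
    (σ : ℂ) (h : (D : ℂ) ^ 2 * σ ^ 4 + σ ^ 2 - (c : ℂ) = 0) : σ.re ≠ 0 ∧ σ.im ≠ 0 := by
  constructor
  · intro hre
    have hσ : σ = (σ.im : ℂ) * Complex.I := by
      conv_lhs => rw [← Complex.re_add_im σ]
      rw [hre]; simp
    set y := σ.im with hy
    rw [hσ] at h
    have h2 : ((D^2*y^4 - y^2 - c : ℝ) : ℂ) = 0 := by
      push_cast
      linear_combination h + ((D:ℂ)^2*(y:ℂ)^4*(1 - Complex.I^2) - (y:ℂ)^2) * Complex.I_sq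
    have h3 : D^2*y^4 - y^2 - c = 0 := by exact_mod_cast h2
    nlinarith [sq_nonneg (2*D^2*y^2 - 1), sq_nonneg y, sq_nonneg (D*y^2)]
  · intro him
    have hσ : σ = (σ.re : ℂ) := by
      apply Complex.ext <;> simp [him]
    set x := σ.re with hx
    rw [hσ] at h
    have h2 : ((D^2*x^4 + x^2 - c : ℝ) : ℂ) = 0 := by push_cast; linear_combination h
    have h3 : D^2*x^4 + x^2 - c = 0 := by exact_mod_cast h2
    nlinarith [sq_nonneg x, sq_nonneg (D*x^2)]

private lemma sq_neg_real_aux (σ : ℂ) (r : ℝ) (hr : r < 0) (h : σ^2 = (r:ℂ)) : σ.re = 0 := by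
  by_contra hre
  rw [sq] at h
  have h1 := congrArg Complex.im h
  have h2 := congrArg Complex.re h
  simp [Complex.mul_im, Complex.mul_re] at h1 h2
  have him : σ.im = 0 := by
    rcases mul_eq_zero.mp (by linarith : σ.re * σ.im = 0) with h' | h'
    · exact absurd h' hre
    · exact h'
  rw [him] at h2
  nlinarith [sq_nonneg σ.re]

private lemma elliptic_aux (D c : ℝ) (hD : 0 < D) (hc : c < 0) (hΔ : 0 < 1 + 4*D^2*c)
    (σ : ℂ) (h : (D : ℂ) ^ 2 * σ ^ 4 + σ ^ 2 - (c : ℂ) = 0) : σ ≠ 0 ∧ σ.re = 0 := by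
  have hD2 : (0:ℝ) < D^2 := by positivity
  constructor
  · rintro rfl
    simp at h
    have : c = 0 := by exact_mod_cast h
    linarith
  · set Δ := 1 + 4*D^2*c with hΔdef
    set s := Real.sqrt Δ with hs
    have hs2 : s^2 = Δ := Real.sq_sqrt hΔ.le
    have hs0 : 0 ≤ s := Real.sqrt_nonneg _
    have hs1 : s < 1 := by nlinarith [mul_pos hD2 (neg_pos.mpr hc)]
    set t₁ := (-1 + s)/(2*D^2) with ht1
    set t₂ := (-1 - s)/(2*D^2) with ht2
    have ht₁ : t₁ < 0 := div_neg_of_neg_of_pos (by linarith) (by positivity)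
    have ht₂ : t₂ < 0 := div_neg_of_neg_of_pos (by linarith) (by positivity)
    have hD2ne : D^2 ≠ 0 := hD2.ne'
    have hsumR : D^2 * (t₁ + t₂) = -1 := by
      rw [ht1, ht2]; field_simp; ring
    have hprodR : D^2 * (t₁ * t₂) = -c := by
      rw [ht1, ht2]; field_simp; nlinarith [hs2]
    have hsum' : (D:ℂ)^2 * ((t₁:ℂ) + (t₂:ℂ)) = -1 := by exact_mod_cast hsumR
    have hprod' : (D:ℂ)^2 * ((t₁:ℂ) * (t₂:ℂ)) = -(c:ℂ) := by exact_mod_cast hprodR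
    have hfac : (D:ℂ)^2 * (σ^2 - (t₁:ℂ)) * (σ^2 - (t₂:ℂ)) = 0 := by
      rw [← h]
      linear_combination (-(σ^2 : ℂ)) * hsum' + hprod'
    rcases mul_eq_zero.mp hfac with h' | h'
    · rcases mul_eq_zero.mp h' with h'' | h''
      · exfalso
        have hD0 : D ≠ 0 := hD.ne'
        exact hD0 (by simpa using h'')
      · exact sq_neg_real_aux σ t₁ ht₁ (sub_eq_zero.mp h'')
    · exact sq_neg_real_aux σ t₂ ht₂ (sub_eq_zero.mp h')

/-- roots of `D²σ⁴ + σ² − (1−λ)/λ` for `λ < 0` (the characteristic equation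
at the equilibrium `O` on the lower sheet), with `λ₋ = 4D²/(4D²−1)`:
(1) for `0 < D² < 1/4` and `λ₋ < λ < 0` every root has nonzero real and imaginary parts
(`O` is a saddle-focus); (2) for `0 < D² < 1/4` and `λ < λ₋` every root is nonzero and
purely imaginary (`O` is an elliptic point); (3) for `D² ≥ 1/4` and any `λ < 0` every
root has nonzero real and imaginary parts. -/
theorem stmt_19 (D : ℝ) (hD : 0 < D) :
    (D ^ 2 < 1 / 4 → ∀ lam : ℝ, lam < 0 → 4 * D ^ 2 / (4 * D ^ 2 - 1) < lam →
      ∀ σ : ℂ, (D : ℂ) ^ 2 * σ ^ 4 + σ ^ 2 - (((1 - lam) / lam : ℝ) : ℂ) = 0 →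
        σ.re ≠ 0 ∧ σ.im ≠ 0) ∧
    (D ^ 2 < 1 / 4 → ∀ lam : ℝ, lam < 0 → lam < 4 * D ^ 2 / (4 * D ^ 2 - 1) →
      ∀ σ : ℂ, (D : ℂ) ^ 2 * σ ^ 4 + σ ^ 2 - (((1 - lam) / lam : ℝ) : ℂ) = 0 →
        σ ≠ 0 ∧ σ.re = 0) ∧
    (1 / 4 ≤ D ^ 2 → ∀ lam : ℝ, lam < 0 →
      ∀ σ : ℂ, (D : ℂ) ^ 2 * σ ^ 4 + σ ^ 2 - (((1 - lam) / lam : ℝ) : ℂ) = 0 →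
        σ.re ≠ 0 ∧ σ.im ≠ 0) := by
  have hD2 : (0:ℝ) < D^2 := by positivity
  refine ⟨?_, ?_, ?_⟩
  · intro hD4 lam hlam hgt σ h
    have hc : (1 - lam) / lam < 0 := div_neg_of_pos_of_neg (by linarith) hlam
    have h41 : 4 * D ^ 2 - 1 < 0 := by linarith
    have key : lam * (4 * D ^ 2 - 1) < 4 * D ^ 2 := (div_lt_iff_of_neg h41).mp hgt
    have hnum : 0 < lam + 4*D^2*(1 - lam) := by nlinarith
    have hΔ : 1 + 4*D^2*((1 - lam)/lam) < 0 := by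
      have h1 : 1 + 4*D^2*((1 - lam)/lam) = (lam + 4*D^2*(1 - lam))/lam := by
        field_simp [hlam.ne]
      rw [h1]
      exact div_neg_of_pos_of_neg hnum hlam
    exact saddle_aux D _ hD hc hΔ σ h
  · intro hD4 lam hlam hlt σ h
    have hc : (1 - lam) / lam < 0 := div_neg_of_pos_of_neg (by linarith) hlam
    have h41 : 4 * D ^ 2 - 1 < 0 := by linarith
    have key : 4 * D ^ 2 < lam * (4 * D ^ 2 - 1) := (lt_div_iff_of_neg h41).mp hlt
    have hnum : lam + 4*D^2*(1 - lam) < 0 := by nlinarith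
    have hΔ : 0 < 1 + 4*D^2*((1 - lam)/lam) := by
      have h1 : 1 + 4*D^2*((1 - lam)/lam) = (lam + 4*D^2*(1 - lam))/lam := by
        field_simp [hlam.ne]
      rw [h1]
      exact div_pos_of_neg_of_neg hnum hlam
    exact elliptic_aux D _ hD hc hΔ σ h
  · intro hD4 lam hlam σ h
    have hc : (1 - lam) / lam < 0 := div_neg_of_pos_of_neg (by linarith) hlam
    have hnum : 0 < lam + 4*D^2*(1 - lam) := by
      nlinarith [mul_nonneg (neg_nonneg.mpr hlam.le) (show (0:ℝ) ≤ 4*D^2 - 1 by linarith)]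
    have hΔ : 1 + 4*D^2*((1 - lam)/lam) < 0 := by
      have h1 : 1 + 4*D^2*((1 - lam)/lam) = (lam + 4*D^2*(1 - lam))/lam := by
        field_simp [hlam.ne]
      rw [h1]
      exact div_neg_of_pos_of_neg hnum hlam
    exact saddle_aux D _ hD hc hΔ σ h
end
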